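/- Let m, n be natural numbers. The product of standard simplices Δ_m × Δ_n ⊂ ℝ^{m+n} is the union of the staircase simplices: for every point (x,y) with x ∈ Δ_m and y ∈ Δ_n there exists a staircase p_0,…,p_{m+n} from (0,0) to (m,n) such that (x,y) lies in the convex hull of {w(p_t) : 0 ≤ t ≤ m+n}; conversely, each such convex hull is contained in Δ_m × Δ_n. -/

import Mathlib

/-- A staircase from `(0,0)` to `(m,n)`. -/
def IsStaircase (m n : ℕ) (p : Fin (m + n + 1) → ℕ × ℕ) : Prop :=
  p 0 = (0, 0) ∧ p (Fin.last (m + n)) = (m, n) ∧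
    ∀ t : Fin (m + n), p t.succ = p t.castSucc + (1, 0) ∨ p t.succ = p t.castSucc + (0, 1)

/-- `stdVert d k` is the vertex `e_k` of the standard simplex `Δ_d ⊂ ℝ^d`: the `k`-th
standard unit vector for `1 ≤ k ≤ d`, and the origin for `k = 0`. -/
noncomputable def stdVert (d k : ℕ) : Fin d → ℝ := fun a => if (a : ℕ) + 1 = k then 1 else 0

/-- The vertex `w(i,j) = (e_i, e_j) ∈ ℝ^{m+n}` of the product `Δ_m × Δ_n`. -/
noncomputable def wPt (m n : ℕ) (v : ℕ × ℕ) : Fin (m + n) → ℝ :=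
  Fin.append (stdVert m v.1) (stdVert n v.2)


open Finset

lemma staircase_base (m : ℕ) (c : ℝ) (x : ℕ → ℝ)
    (hx : ∀ i < m, 0 ≤ x i) (hxc : ∑ i ∈ range m, x i ≤ c) :
    ∃ (P : ℕ → ℕ × ℕ) (L : ℕ → ℝ),
      P 0 = (0, 0) ∧ P m = (m, 0) ∧
      (∀ t < m, P (t + 1) = P t + (1, 0) ∨ P (t + 1) = P t + (0, 1)) ∧
      (∀ t ≤ m, (P t).1 ≤ m ∧ (P t).2 ≤ 0) ∧
      (∀ t ≤ m, 0 ≤ L t) ∧ (∑ t ∈ range (m + 1), L t) = c ∧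
      (∀ a < m, ∑ t ∈ range (m + 1), L t * (if (P t).1 = a + 1 then 1 else 0) = x a) := by
  have hs : (0:ℝ) ≤ ∑ i ∈ range m, x i := Finset.sum_nonneg fun i hi => hx i (mem_range.1 hi)
  refine ⟨fun t => (t, 0), fun t => if t = 0 then c - ∑ i ∈ range m, x i else x (t - 1),
    rfl, rfl, fun t _ => Or.inl (by simp [Prod.ext_iff]), fun t ht => ⟨ht, le_refl 0⟩, ?_, ?_, ?_⟩
  · rintro (_ | s) ht
    · simpa using by linarith
    · simpa using hx s (by omega)
  · rw [Finset.sum_range_succ']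
    simp
  · intro a ha
    have : ∀ t ∈ range (m + 1),
        (if t = 0 then c - ∑ i ∈ range m, x i else x (t-1)) * (if t = a + 1 then (1:ℝ) else 0)
        = if t = a + 1 then x a else 0 := by
      intro t _
      by_cases h : t = a + 1
      · subst h; simp
      · simp [h]
    rw [Finset.sum_congr rfl this, Finset.sum_ite_eq', if_pos (mem_range.2 (by omega))]

lemma staircase_base2 (n : ℕ) (c : ℝ) (y : ℕ → ℝ)
    (hy : ∀ j < n, 0 ≤ y j) (hyc : ∑ j ∈ range n, y j ≤ c) :
    ∃ (P : ℕ → ℕ × ℕ) (L : ℕ → ℝ),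
      P 0 = (0, 0) ∧ P n = (0, n) ∧
      (∀ t < n, P (t + 1) = P t + (1, 0) ∨ P (t + 1) = P t + (0, 1)) ∧
      (∀ t ≤ n, (P t).1 ≤ 0 ∧ (P t).2 ≤ n) ∧
      (∀ t ≤ n, 0 ≤ L t) ∧ (∑ t ∈ range (n + 1), L t) = c ∧
      (∀ b < n, ∑ t ∈ range (n + 1), L t * (if (P t).2 = b + 1 then 1 else 0) = y b) := by
  have hs : (0:ℝ) ≤ ∑ j ∈ range n, y j := Finset.sum_nonneg fun j hj => hy j (mem_range.1 hj)
  refine ⟨fun t => (0, t), fun t => if t = 0 then c - ∑ j ∈ range n, y j else y (t - 1),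
    rfl, rfl, fun t _ => Or.inr (by simp [Prod.ext_iff]), fun t ht => ⟨le_refl 0, ht⟩, ?_, ?_, ?_⟩
  · rintro (_ | s) ht
    · simpa using by linarith
    · simpa using hy s (by omega)
  · rw [Finset.sum_range_succ']
    simp
  · intro b hb
    have : ∀ t ∈ range (n + 1),
        (if t = 0 then c - ∑ j ∈ range n, y j else y (t-1)) * (if t = b + 1 then (1:ℝ) else 0)
        = if t = b + 1 then y b else 0 := by
      intro t _
      by_cases h : t = b + 1
      · subst h; simp
      · simp [h]
    rw [Finset.sum_congr rfl this, Finset.sum_ite_eq', if_pos (mem_range.2 (by omega))]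

lemma staircase_aux : ∀ N m n, m + n = N → ∀ (c : ℝ) (x y : ℕ → ℝ),
    (∀ i < m, 0 ≤ x i) → (∀ j < n, 0 ≤ y j) →
    (∑ i ∈ range m, x i) ≤ c → (∑ j ∈ range n, y j) ≤ c →
    ∃ (P : ℕ → ℕ × ℕ) (L : ℕ → ℝ),
      P 0 = (0, 0) ∧ P (m + n) = (m, n) ∧
      (∀ t < m + n, P (t + 1) = P t + (1, 0) ∨ P (t + 1) = P t + (0, 1)) ∧
      (∀ t ≤ m + n, (P t).1 ≤ m ∧ (P t).2 ≤ n) ∧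
      (∀ t ≤ m + n, 0 ≤ L t) ∧ (∑ t ∈ range (m + n + 1), L t) = c ∧
      (∀ a < m, ∑ t ∈ range (m + n + 1), L t * (if (P t).1 = a + 1 then 1 else 0) = x a) ∧
      (∀ b < n, ∑ t ∈ range (m + n + 1), L t * (if (P t).2 = b + 1 then 1 else 0) = y b) := by
  intro N
  induction N with
  | zero =>
    intro m n hmn c x y hx hy hxc hyc
    obtain ⟨rfl, rfl⟩ : m = 0 ∧ n = 0 := by omega
    obtain ⟨P, L, h1, h2, h3, h4, h5, h6, h7⟩ := staircase_base 0 c x hx hxc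
    exact ⟨P, L, h1, h2, h3, h4, h5, h6, h7, fun b hb => absurd hb (Nat.not_lt_zero b)⟩
  | succ N ih =>
    intro m n hmn c x y hx hy hxc hyc
    rcases n with _ | n'
    · obtain ⟨P, L, h1, h2, h3, h4, h5, h6, h7⟩ := staircase_base m c x hx hxc
      exact ⟨P, L, h1, h2, h3, h4, h5, h6, h7, fun b hb => absurd hb (Nat.not_lt_zero b)⟩
    rcases m with _ | m'
    · simp only [Nat.zero_add]
      obtain ⟨P, L, h1, h2, h3, h4, h5, h6, h7⟩ := staircase_base2 (n' + 1) c y hy hyc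
      exact ⟨P, L, h1, h2, h3, h4, h5, h6, fun a ha => absurd ha (Nat.not_lt_zero a), h7⟩
    -- inductive step : m = m' + 1, n = n' + 1
    have hxm : 0 ≤ x m' := hx m' (Nat.lt_succ_self m')
    have hyn : 0 ≤ y n' := hy n' (Nat.lt_succ_self n')
    rcases le_total (y n') (x m') with hle | hle
    · -- peel the y-step at the end
      simp only [show m' + 1 + (n' + 1) = m' + 1 + n' + 1 from rfl]
      obtain ⟨P, L, h1, h2, h3, h4, h5, h6, h7, h8⟩ :=
        ih (m' + 1) n' (by omega) (c - y n') (Function.update x m' (x m' - y n')) y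
          (fun i hi => by
            rcases eq_or_ne i m' with rfl | hne
            · simpa using sub_nonneg.2 hle
            · simpa [Function.update_of_ne hne] using hx i (by omega))
          (fun j hj => hy j (by omega))
          (by
            rw [Finset.sum_update_of_mem (mem_range.2 (Nat.lt_succ_self m'))]
            rw [Finset.sum_eq_sum_sdiff_singleton_add (mem_range.2 (Nat.lt_succ_self m')) x] at hxc
            linarith)
          (by
            rw [Finset.sum_range_succ] at hyc
            linarith)
      set P₂ : ℕ → ℕ × ℕ := fun t => if t ≤ m' + 1 + n' then P t else (m' + 1, n' + 1) with hP₂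
      set L₂ : ℕ → ℝ := fun t => if t ≤ m' + 1 + n' then L t else y n' with hL₂
      have hP₂le : ∀ t, t ≤ m' + 1 + n' → P₂ t = P t := fun t ht => by simp [hP₂, ht]
      have hL₂le : ∀ t, t ≤ m' + 1 + n' → L₂ t = L t := fun t ht => by simp [hL₂, ht]
      have hP₂gt : P₂ (m' + 1 + n' + 1) = (m' + 1, n' + 1) := by simp [hP₂]
      have hL₂gt : L₂ (m' + 1 + n' + 1) = y n' := by simp [hL₂]
      refine ⟨P₂, L₂, ?_, ?_, ?_, ?_, ?_, ?_, ?_, ?_⟩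
      · rw [hP₂le 0 (Nat.zero_le _), h1]
      · exact hP₂gt
      · intro t ht
        rcases lt_or_eq_of_le (Nat.lt_succ_iff.1 ht) with ht' | ht'
        · rw [hP₂le (t+1) (by omega), hP₂le t (by omega)]
          exact h3 t ht'
        · subst ht'
          rw [hP₂gt, hP₂le _ le_rfl, h2]
          exact Or.inr (by simp [Prod.ext_iff])
      · intro t ht
        rcases Nat.lt_succ_iff_lt_or_eq.1 (Nat.lt_succ_of_le ht) with ht' | ht'
        · rw [hP₂le t (by omega)]
          obtain ⟨u, v⟩ := h4 t (by omega)
          exact ⟨u, by omega⟩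
        · rw [ht', hP₂gt]
          exact ⟨le_rfl, le_rfl⟩
      · intro t ht
        rcases Nat.lt_succ_iff_lt_or_eq.1 (Nat.lt_succ_of_le ht) with ht' | ht'
        · rw [hL₂le t (by omega)]; exact h5 t (by omega)
        · rw [ht', hL₂gt]; exact hyn
      · rw [Finset.sum_range_succ, hL₂gt,
          Finset.sum_congr rfl (fun t ht => hL₂le t (by have := mem_range.1 ht; omega))]
        · rw [h6]; ring
      · intro a ha
        rw [Finset.sum_range_succ, hL₂gt, hP₂gt,
          Finset.sum_congr rfl (fun t ht => by
            rw [hL₂le t (by have := mem_range.1 ht; omega), hP₂le t (by have := mem_range.1 ht; omega)])]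
        rcases eq_or_ne a m' with hne | hne
        · rw [hne, h7 m' (Nat.lt_succ_self m')]
          simp [Function.update_self]
        · rw [h7 a ha]
          rw [Function.update_of_ne hne]
          have : (m' + 1 = a + 1) = False := by simp; omega
          simp [this]
          exact fun h => absurd h (by omega)
      · intro b hb
        rw [Finset.sum_range_succ, hL₂gt, hP₂gt,
          Finset.sum_congr rfl (fun t ht => by
            rw [hL₂le t (by have := mem_range.1 ht; omega), hP₂le t (by have := mem_range.1 ht; omega)])]
        rcases Nat.lt_succ_iff_lt_or_eq.1 hb with hb' | hb'
        · rw [h8 b hb']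
          have : (n' + 1 = b + 1) = False := by simp; omega
          simp [this]
          exact fun h => absurd h (by omega)
        · have hz : ∀ t ∈ range (m' + 1 + n' + 1),
              L t * (if (P t).2 = b + 1 then (1:ℝ) else 0) = 0 := by
            intro t ht
            have h2b := (h4 t (by have := mem_range.1 ht; omega)).2
            have : ((P t).2 = b + 1) = False := by simp; omega
            simp [this]
          rw [Finset.sum_congr rfl hz, hb']
          simp
    · -- peel the x-step at the end
      simp only [show m' + 1 + (n' + 1) = m' + (n' + 1) + 1 from by omega]
      obtain ⟨P, L, h1, h2, h3, h4, h5, h6, h7, h8⟩ :=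
        ih m' (n' + 1) (by omega) (c - x m') x (Function.update y n' (y n' - x m'))
          (fun i hi => hx i (by omega))
          (fun j hj => by
            rcases eq_or_ne j n' with rfl | hne
            · simpa using sub_nonneg.2 hle
            · simpa [Function.update_of_ne hne] using hy j (by omega))
          (by
            rw [Finset.sum_range_succ] at hxc
            linarith)
          (by
            rw [Finset.sum_update_of_mem (mem_range.2 (Nat.lt_succ_self n'))]
            rw [Finset.sum_eq_sum_sdiff_singleton_add (mem_range.2 (Nat.lt_succ_self n')) y] at hyc
            linarith)
      set P₂ : ℕ → ℕ × ℕ := fun t => if t ≤ m' + (n' + 1) then P t else (m' + 1, n' + 1) with hP₂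
      set L₂ : ℕ → ℝ := fun t => if t ≤ m' + (n' + 1) then L t else x m' with hL₂
      have hP₂le : ∀ t, t ≤ m' + (n' + 1) → P₂ t = P t := fun t ht => by simp [hP₂, ht]
      have hL₂le : ∀ t, t ≤ m' + (n' + 1) → L₂ t = L t := fun t ht => by simp [hL₂, ht]
      have hP₂gt : P₂ (m' + (n' + 1) + 1) = (m' + 1, n' + 1) := by simp [hP₂]
      have hL₂gt : L₂ (m' + (n' + 1) + 1) = x m' := by simp [hL₂]
      refine ⟨P₂, L₂, ?_, ?_, ?_, ?_, ?_, ?_, ?_, ?_⟩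
      · rw [hP₂le 0 (Nat.zero_le _), h1]
      · exact hP₂gt
      · intro t ht
        rcases lt_or_eq_of_le (Nat.lt_succ_iff.1 ht) with ht' | ht'
        · rw [hP₂le (t+1) (by omega), hP₂le t (by omega)]
          exact h3 t ht'
        · subst ht'
          rw [hP₂gt, hP₂le _ le_rfl, h2]
          exact Or.inl (by simp [Prod.ext_iff])
      · intro t ht
        rcases Nat.lt_succ_iff_lt_or_eq.1 (Nat.lt_succ_of_le ht) with ht' | ht'
        · rw [hP₂le t (by omega)]
          obtain ⟨u, v⟩ := h4 t (by omega)
          exact ⟨by omega, v⟩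
        · rw [ht', hP₂gt]
          exact ⟨le_rfl, le_rfl⟩
      · intro t ht
        rcases Nat.lt_succ_iff_lt_or_eq.1 (Nat.lt_succ_of_le ht) with ht' | ht'
        · rw [hL₂le t (by omega)]; exact h5 t (by omega)
        · rw [ht', hL₂gt]; exact hxm
      · rw [Finset.sum_range_succ, hL₂gt,
          Finset.sum_congr rfl (fun t ht => hL₂le t (by have := mem_range.1 ht; omega))]
        · rw [h6]; ring
      · intro a ha
        rw [Finset.sum_range_succ, hL₂gt, hP₂gt,
          Finset.sum_congr rfl (fun t ht => by
            rw [hL₂le t (by have := mem_range.1 ht; omega), hP₂le t (by have := mem_range.1 ht; omega)])]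
        rcases Nat.lt_succ_iff_lt_or_eq.1 ha with ha' | ha'
        · rw [h7 a ha']
          have : (m' + 1 = a + 1) = False := by simp; omega
          simp [this]
          exact fun h => absurd h (by omega)
        · have hz : ∀ t ∈ range (m' + (n' + 1) + 1),
              L t * (if (P t).1 = a + 1 then (1:ℝ) else 0) = 0 := by
            intro t ht
            have h1b := (h4 t (by have := mem_range.1 ht; omega)).1
            have : ((P t).1 = a + 1) = False := by simp; omega
            simp [this]
          rw [Finset.sum_congr rfl hz, ha']
          simp
      · intro b hb
        rw [Finset.sum_range_succ, hL₂gt, hP₂gt,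
          Finset.sum_congr rfl (fun t ht => by
            rw [hL₂le t (by have := mem_range.1 ht; omega), hP₂le t (by have := mem_range.1 ht; omega)])]
        rcases eq_or_ne b n' with hne | hne
        · rw [hne, h8 n' (Nat.lt_succ_self n')]
          simp [Function.update_self]
        · rw [h8 b hb]
          rw [Function.update_of_ne hne]
          have : (n' + 1 = b + 1) = False := by simp; omega
          simp [this]
          exact fun h => absurd h (by omega)

lemma stdVert_nonneg (d k : ℕ) (a : Fin d) : 0 ≤ stdVert d k a := by
  unfold stdVert; split <;> norm_num

lemma sum_stdVert_le (d k : ℕ) : ∑ a, stdVert d k a ≤ 1 := by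
  unfold stdVert
  rw [Finset.sum_boole]
  have : ({a : Fin d | (a : ℕ) + 1 = k} : Finset (Fin d)).card ≤ 1 := by
    apply Finset.card_le_one.2
    intro a ha b hb
    simp only [Finset.mem_filter] at ha hb
    exact Fin.ext (by omega)
  exact_mod_cast this

theorem staircase_simplices_cover (m n : ℕ) :
    (∀ x : Fin m → ℝ, ∀ y : Fin n → ℝ,
      (∀ i, 0 ≤ x i) → ∑ i, x i ≤ 1 → (∀ j, 0 ≤ y j) → ∑ j, y j ≤ 1 →
        ∃ p : Fin (m + n + 1) → ℕ × ℕ, IsStaircase m n p ∧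
          Fin.append x y ∈ convexHull ℝ (Set.range fun t => wPt m n (p t))) ∧
    (∀ p : Fin (m + n + 1) → ℕ × ℕ, IsStaircase m n p →
      ∀ z ∈ convexHull ℝ (Set.range fun t => wPt m n (p t)),
        ∃ x : Fin m → ℝ, ∃ y : Fin n → ℝ,
          (∀ i, 0 ≤ x i) ∧ ∑ i, x i ≤ 1 ∧ (∀ j, 0 ≤ y j) ∧ ∑ j, y j ≤ 1 ∧
            z = Fin.append x y) := by
  constructor
  · intro x y hx hxs hy hys
    set x' : ℕ → ℝ := fun i => if h : i < m then x ⟨i, h⟩ else 0 with hx'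
    set y' : ℕ → ℝ := fun j => if h : j < n then y ⟨j, h⟩ else 0 with hy'
    have hxeq : ∑ i ∈ range m, x' i = ∑ i, x i := by
      rw [← Fin.sum_univ_eq_sum_range]
      exact Finset.sum_congr rfl fun i _ => by simp [hx', i.isLt]
    have hyeq : ∑ j ∈ range n, y' j = ∑ j, y j := by
      rw [← Fin.sum_univ_eq_sum_range]
      exact Finset.sum_congr rfl fun j _ => by simp [hy', j.isLt]
    obtain ⟨P, L, h1, h2, h3, h4, h5, h6, h7, h8⟩ :=
      staircase_aux (m + n) m n rfl 1 x' y'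
        (fun i hi => by simp [hx', hi]; exact hx ⟨i, hi⟩)
        (fun j hj => by simp [hy', hj]; exact hy ⟨j, hj⟩)
        (by rw [hxeq]; exact hxs) (by rw [hyeq]; exact hys)
    refine ⟨fun t => P t.val, ⟨h1, h2, fun t => h3 t.val t.isLt⟩, ?_⟩
    have hc : ∑ t : Fin (m + n + 1), L t.val = 1 := by
      rw [Fin.sum_univ_eq_sum_range]; exact h6
    have hm := Finset.centerMass_mem_convexHull (Finset.univ : Finset (Fin (m + n + 1)))
      (w := fun t => L t.val) (fun t _ => h5 t.val (by omega))
      (by rw [hc]; norm_num) (z := fun t => wPt m n (P t.val))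
      (fun t _ => Set.mem_range_self t)
    rw [Finset.centerMass_eq_of_sum_1 _ _ hc] at hm
    convert hm using 1
    funext i
    rw [Finset.sum_apply]
    refine Fin.addCases (fun a => ?_) (fun b => ?_) i
    · have e1 : ∀ t : Fin (m + n + 1),
          (L t.val • wPt m n (P t.val)) (Fin.castAdd n a)
          = L t.val * (if (P t.val).1 = (a : ℕ) + 1 then 1 else 0) := by
        intro t
        simp only [Pi.smul_apply, smul_eq_mul, wPt, Fin.append_left, stdVert]
        by_cases h : (P t.val).1 = (a : ℕ) + 1 <;> simp [h, eq_comm]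
      rw [Fin.append_left, Finset.sum_congr rfl fun t _ => e1 t,
        Fin.sum_univ_eq_sum_range (fun t => L t * (if (P t).1 = (a : ℕ) + 1 then 1 else 0)),
        h7 a a.isLt]
      simp [hx', a.isLt]
    · have e1 : ∀ t : Fin (m + n + 1),
          (L t.val • wPt m n (P t.val)) (Fin.natAdd m b)
          = L t.val * (if (P t.val).2 = (b : ℕ) + 1 then 1 else 0) := by
        intro t
        simp only [Pi.smul_apply, smul_eq_mul, wPt, Fin.append_right, stdVert]
        by_cases h : (P t.val).2 = (b : ℕ) + 1 <;> simp [h, eq_comm]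
      rw [Fin.append_right, Finset.sum_congr rfl fun t _ => e1 t,
        Fin.sum_univ_eq_sum_range (fun t => L t * (if (P t).2 = (b : ℕ) + 1 then 1 else 0)),
        h8 b b.isLt]
      simp [hy', b.isLt]
  · intro p _ z hz
    have hsub : convexHull ℝ (Set.range fun t => wPt m n (p t)) ⊆
        {w : Fin (m + n) → ℝ | (∀ i, 0 ≤ w i) ∧ (∑ i : Fin m, w (Fin.castAdd n i)) ≤ 1 ∧
          (∑ j : Fin n, w (Fin.natAdd m j)) ≤ 1} := by
      apply convexHull_min
      · rintro _ ⟨t, rfl⟩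
        refine ⟨fun i => ?_, ?_, ?_⟩
        · refine Fin.addCases (fun a => ?_) (fun b => ?_) i
          · simpa only [wPt, Fin.append_left] using stdVert_nonneg m (p t).1 a
          · simpa only [wPt, Fin.append_right] using stdVert_nonneg n (p t).2 b
        · simp only [wPt, Fin.append_left]; exact sum_stdVert_le _ _
        · simp only [wPt, Fin.append_right]; exact sum_stdVert_le _ _
      · intro u hu v hv a b ha hb hab
        refine ⟨fun i => ?_, ?_, ?_⟩
        · have := add_nonneg (mul_nonneg ha (hu.1 i)) (mul_nonneg hb (hv.1 i))
          simpa using this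
        · simp only [Pi.add_apply, Pi.smul_apply, smul_eq_mul]
          rw [Finset.sum_add_distrib, ← Finset.mul_sum, ← Finset.mul_sum]
          nlinarith [hu.2.1, hv.2.1]
        · simp only [Pi.add_apply, Pi.smul_apply, smul_eq_mul]
          rw [Finset.sum_add_distrib, ← Finset.mul_sum, ← Finset.mul_sum]
          nlinarith [hu.2.2, hv.2.2]
    obtain ⟨hzn, hz1, hz2⟩ := hsub hz
    refine ⟨fun i => z (Fin.castAdd n i), fun j => z (Fin.natAdd m j),
      fun i => hzn _, hz1, fun j => hzn _, hz2, ?_⟩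
    funext i
    refine Fin.addCases (fun a => ?_) (fun b => ?_) i
    · rw [Fin.append_left]
    · rw [Fin.append_right]
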